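/- Let G be a connected graph and e = uv a cut edge with deg(u) ≥ 2 and deg(v) ≥ 2. Then meg(G) ≤ meg(G \ {e}) ≤ meg(G) + 2. -/

import Mathlib

open SimpleGraph

variable {V : Type*}

/-- A pair of vertices `u, v` monitors edge `e` in `G` if `u` and `v` are connected
and `e` lies on every shortest path (walk of length `G.dist u v`) between them. -/
def monitors (G : SimpleGraph V) (u v : V) (e : Sym2 V) : Prop :=
  G.Reachable u v ∧ ∀ p : G.Walk u v, p.length = G.dist u v → e ∈ p.edges

/-- `M` is a monitoring edge-geodetic set of `G`. -/
def IsMEGSet (G : SimpleGraph V) (M : Set V) : Prop :=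
  ∀ e ∈ G.edgeSet, ∃ u ∈ M, ∃ v ∈ M, monitors G u v e

/-- The monitoring edge-geodetic number: minimum size of an MEG-set. -/
noncomputable def meg (G : SimpleGraph V) : ℕ :=
  sInf {n | ∃ M : Finset V, IsMEGSet G ↑M ∧ M.card = n}

section Aux

variable {G : SimpleGraph V} {u v : V}

private lemma aux_sym2 {x c : V} (h : s(x, c) = s(u, v)) :
    (x = u ∧ c = v) ∨ (x = v ∧ c = u) := by
  rwa [Sym2.eq_iff] at h

private lemma del_adj {a b : V} (ha : G.Adj a b) (hne : s(a, b) ≠ s(u, v)) :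
    (G.deleteEdges {s(u, v)}).Adj a b :=
  (SimpleGraph.deleteEdges_adj).mpr ⟨ha, by simpa using hne⟩

private lemma le_edges {x y : V} (q : (G.deleteEdges {s(u, v)}).Walk x y) :
    ∀ e ∈ q.edges, e ∈ G.edgeSet :=
  fun _ he => edgeSet_mono (G.deleteEdges_le _) (q.edges_subset_edgeSet he)

private lemma reach_all (h : (G.deleteEdges {s(u, v)}).Reachable u v) {x y : V}
    (p : G.Walk x y) : (G.deleteEdges {s(u, v)}).Reachable x y := by
  induction p with
  | nil => exact Reachable.refl _
  | @cons a b c ha p ih =>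
    refine Reachable.trans ?_ ih
    by_cases he : s(a, b) = s(u, v)
    · rcases aux_sym2 he with ⟨rfl, rfl⟩ | ⟨rfl, rfl⟩
      · exact h
      · exact h.symm
    · exact (del_adj ha he).reachable

private lemma hn_of_hcut (hconn : G.Connected)
    (hcut : ¬ (G.deleteEdges {s(u, v)}).Connected) :
    ¬ (G.deleteEdges {s(u, v)}).Reachable u v := by
  intro h
  apply hcut
  rw [connected_iff]
  refine ⟨fun x y => ?_, hconn.nonempty⟩
  obtain ⟨p⟩ := hconn.preconnected x y
  exact reach_all h p

private lemma side (hconn : G.Connected) (z : V) :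
    (G.deleteEdges {s(u, v)}).Reachable u z ∨ (G.deleteEdges {s(u, v)}).Reachable v z := by
  have key : ∀ {x w : V} (_ : G.Walk x w),
      ((G.deleteEdges {s(u, v)}).Reachable u x ∨ (G.deleteEdges {s(u, v)}).Reachable v x) →
      ((G.deleteEdges {s(u, v)}).Reachable u w ∨ (G.deleteEdges {s(u, v)}).Reachable v w) := by
    intro x w p
    induction p with
    | nil => exact id
    | @cons a b c ha p ih =>
      intro h
      apply ih
      by_cases he : s(a, b) = s(u, v)
      · rcases aux_sym2 he with ⟨rfl, rfl⟩ | ⟨rfl, rfl⟩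
        · exact Or.inr (Reachable.refl _)
        · exact Or.inl (Reachable.refl _)
      · have hadj := del_adj ha he
        rcases h with h | h
        · exact Or.inl (h.trans hadj.reachable)
        · exact Or.inr (h.trans hadj.reachable)
  obtain ⟨p⟩ := hconn.preconnected u z
  exact key p (Or.inl (Reachable.refl _))

private lemma crossLen (hn : ¬ (G.deleteEdges {s(u, v)}).Reachable u v) {x y : V}
    (w : G.Walk x y) :
    (G.deleteEdges {s(u, v)}).Reachable x u → (G.deleteEdges {s(u, v)}).Reachable v y →
    G.dist x u + 1 + G.dist v y ≤ w.length := by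
  induction w with
  | nil =>
    intro hx hy
    exact absurd (hx.symm.trans hy.symm) hn
  | @cons a b c ha p ih =>
    intro hx hy
    by_cases he : s(a, b) = s(u, v)
    · rcases aux_sym2 he with ⟨h1, h2⟩ | ⟨h1, h2⟩
      · rw [Walk.length_cons, ← h1, ← h2]
        have h3 : G.dist b c ≤ p.length := dist_le p
        have h4 : G.dist a a = 0 := SimpleGraph.dist_self
        omega
      · rw [h1] at hx
        exact absurd hx.symm hn
    · have hadj := del_adj ha he
      have hbu : (G.deleteEdges {s(u, v)}).Reachable b u := hadj.symm.reachable.trans hx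
      have h1 := ih hbu hy
      have h2 : G.dist a u ≤ 1 + G.dist b u := by
        obtain ⟨q, hq⟩ := (Reachable.mono (G.deleteEdges_le _) hbu).exists_walk_length_eq_dist
        have h3 : G.dist a u ≤ (Walk.cons ha q).length := dist_le _
        rw [Walk.length_cons, hq] at h3
        omega
      rw [Walk.length_cons]
      omega

private lemma crossDist (huv : G.Adj u v) (hconn : G.Connected)
    (hn : ¬ (G.deleteEdges {s(u, v)}).Reachable u v) {x y : V}
    (hx : (G.deleteEdges {s(u, v)}).Reachable x u)
    (hy : (G.deleteEdges {s(u, v)}).Reachable v y) :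
    G.dist x y = G.dist x u + 1 + G.dist v y := by
  refine le_antisymm ?_ ?_
  · have h1 : G.dist x y ≤ G.dist x u + G.dist u y := hconn.dist_triangle
    have h2 : G.dist u y ≤ G.dist u v + G.dist v y := hconn.dist_triangle
    have h3 : G.dist u v = 1 := SimpleGraph.dist_eq_one_iff_adj.mpr huv
    omega
  · obtain ⟨p, hp⟩ := (hconn.preconnected x y).exists_walk_length_eq_dist
    rw [← hp]
    exact crossLen hn p hx hy

private lemma crossOfTrail (hn : ¬ (G.deleteEdges {s(u, v)}).Reachable u v) {x y : V}
    (p : G.Walk x y) :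
    p.IsTrail → s(u, v) ∈ p.edges →
    ((G.deleteEdges {s(u, v)}).Reachable x u ∧ (G.deleteEdges {s(u, v)}).Reachable v y) ∨
    ((G.deleteEdges {s(u, v)}).Reachable x v ∧ (G.deleteEdges {s(u, v)}).Reachable u y) := by
  induction p with
  | nil => intro _ h; simp at h
  | @cons a b c ha p ih =>
    intro ht he
    rw [Walk.isTrail_cons] at ht
    rw [Walk.edges_cons, List.mem_cons] at he
    by_cases hab : s(a, b) = s(u, v)
    · have hnp : ∀ e ∈ p.edges, e ∉ ({s(u, v)} : Set (Sym2 V)) := by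
        intro e hep
        simp only [Set.mem_singleton_iff]
        rintro rfl
        exact ht.2 (hab ▸ hep)
      have hbc : (G.deleteEdges {s(u, v)}).Reachable b c := ⟨p.toDeleteEdges _ hnp⟩
      rcases aux_sym2 hab with ⟨rfl, rfl⟩ | ⟨rfl, rfl⟩
      · exact Or.inl ⟨Reachable.refl _, hbc⟩
      · exact Or.inr ⟨Reachable.refl _, hbc⟩
    · have he' : s(u, v) ∈ p.edges := by
        rcases he with he | he
        · exact absurd he.symm hab
        · exact he
      have hadj := del_adj ha hab
      rcases ih ht.1 he' with ⟨h1, h2⟩ | ⟨h1, h2⟩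
      · exact Or.inl ⟨hadj.reachable.trans h1, h2⟩
      · exact Or.inr ⟨hadj.reachable.trans h1, h2⟩

private lemma noE (hn : ¬ (G.deleteEdges {s(u, v)}).Reachable u v) {x y : V}
    (hr : (G.deleteEdges {s(u, v)}).Reachable x y) (p : G.Walk x y)
    (hp : p.length = G.dist x y) : s(u, v) ∉ p.edges := by
  intro he
  have hpath := p.isPath_of_length_eq_dist hp
  rcases crossOfTrail hn p hpath.isTrail he with ⟨h1, h2⟩ | ⟨h1, h2⟩
  · exact hn (h1.symm.trans (hr.trans h2.symm))
  · exact hn (h2.trans (hr.symm.trans h1))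

private lemma sameDist (hn : ¬ (G.deleteEdges {s(u, v)}).Reachable u v) {x y : V}
    (hr : (G.deleteEdges {s(u, v)}).Reachable x y) :
    (G.deleteEdges {s(u, v)}).dist x y = G.dist x y := by
  apply le_antisymm
  · obtain ⟨p, hp⟩ := (Reachable.mono (G.deleteEdges_le _) hr).exists_walk_length_eq_dist
    have hnot := noE hn hr p hp
    have hok : ∀ e ∈ p.edges, e ∉ ({s(u, v)} : Set (Sym2 V)) := by
      intro e hep
      simp only [Set.mem_singleton_iff]
      rintro rfl
      exact hnot hep
    have h1 : (G.deleteEdges {s(u, v)}).dist x y ≤ (p.toDeleteEdges _ hok).length := dist_le _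
    have h2 : (p.toDeleteEdges _ hok).length = p.length := Walk.length_transfer _ _
    omega
  · obtain ⟨q, hq⟩ := hr.exists_walk_length_eq_dist
    have h1 : G.dist x y ≤ (q.transfer G (le_edges q)).length := dist_le _
    have h2 : (q.transfer G (le_edges q)).length = q.length := Walk.length_transfer _ _
    omega

private lemma monitors_symm {K : SimpleGraph V} {x y : V} {f : Sym2 V}
    (h : monitors K x y f) : monitors K y x f := by
  refine ⟨h.1.symm, fun p hp => ?_⟩
  have := h.2 p.reverse (by rw [Walk.length_reverse, hp, SimpleGraph.dist_comm])
  rwa [Walk.edges_reverse, List.mem_reverse] at this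

private lemma master (huv : G.Adj u v) (hconn : G.Connected)
    (hn : ¬ (G.deleteEdges {s(u, v)}).Reachable u v) {x y : V}
    (hx : (G.deleteEdges {s(u, v)}).Reachable x u)
    (hy : (G.deleteEdges {s(u, v)}).Reachable v y) (f : Sym2 V)
    (hf : f ∈ (G.deleteEdges {s(u, v)}).edgeSet) (hm : monitors G x y f) :
    monitors (G.deleteEdges {s(u, v)}) x u f ∨ monitors (G.deleteEdges {s(u, v)}) v y f := by
  classical
  induction f using Sym2.ind with
  | _ a b =>
  have hab : (G.deleteEdges {s(u, v)}).Adj a b := hf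
  have hfne : s(a, b) ≠ s(u, v) := by
    intro hh
    exact ((SimpleGraph.deleteEdges_adj).mp hab).2 (by simp [hh])
  rcases side hconn a with hua | hva
  · left
    refine ⟨hx, fun q hq => ?_⟩
    obtain ⟨r, hr⟩ := hy.exists_walk_length_eq_dist
    have hwlen : ((q.transfer G (le_edges q)).append
        (Walk.cons huv (r.transfer G (le_edges r)))).length = G.dist x y := by
      rw [Walk.length_append, Walk.length_cons, Walk.length_transfer, Walk.length_transfer,
        hq, hr, sameDist hn hx, sameDist hn hy, crossDist huv hconn hn hx hy]
      omega
    have hfw := hm.2 _ hwlen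
    rw [Walk.edges_append, Walk.edges_cons, Walk.edges_transfer, Walk.edges_transfer,
      List.mem_append, List.mem_cons] at hfw
    rcases hfw with h | h | h
    · exact h
    · exact absurd h hfne
    · exfalso
      have hav : (G.deleteEdges {s(u, v)}).Reachable v a :=
        ⟨r.takeUntil a (r.fst_mem_support_of_mem_edges h)⟩
      exact hn (hua.trans hav.symm)
  · right
    refine ⟨hy, fun q hq => ?_⟩
    obtain ⟨r, hr⟩ := hx.exists_walk_length_eq_dist
    have hwlen : ((r.transfer G (le_edges r)).append
        (Walk.cons huv (q.transfer G (le_edges q)))).length = G.dist x y := by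
      rw [Walk.length_append, Walk.length_cons, Walk.length_transfer, Walk.length_transfer,
        hq, hr, sameDist hn hx, sameDist hn hy, crossDist huv hconn hn hx hy]
      omega
    have hfw := hm.2 _ hwlen
    rw [Walk.edges_append, Walk.edges_cons, Walk.edges_transfer, Walk.edges_transfer,
      List.mem_append, List.mem_cons] at hfw
    rcases hfw with h | h | h
    · exfalso
      have hau : (G.deleteEdges {s(u, v)}).Reachable a u :=
        ⟨r.dropUntil a (r.fst_mem_support_of_mem_edges h)⟩
      exact hn (hau.symm.trans hva.symm)
    · exact absurd h hfne
    · exact h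

private lemma univ_isMEGSet [Fintype V] (K : SimpleGraph V) :
    IsMEGSet K ↑(Finset.univ : Finset V) := by
  intro f
  induction f using Sym2.ind with
  | _ a b =>
  intro hf
  have hadj : K.Adj a b := hf
  refine ⟨a, by simp, b, by simp, hadj.reachable, fun p hp => ?_⟩
  rw [SimpleGraph.dist_eq_one_iff_adj.mpr hadj] at hp
  cases p with
  | nil => simp at hp
  | @cons _ c _ h q =>
    cases q with
    | nil => rw [Walk.edges_cons]; exact List.mem_cons_self
    | cons h' q' => simp [Walk.length_cons] at hp

end Aux

/-- Removing a cut edge whose endpoints both have degree at least `2`: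
`meg G ≤ meg G' ≤ meg G + 2`. -/
theorem deleteCutEdge_meg [Fintype V] (G : SimpleGraph V) [DecidableRel G.Adj]
    (hconn : G.Connected) (u v : V) (huv : G.Adj u v)
    (hcut : ¬ (G.deleteEdges {s(u, v)}).Connected)
    (hu : 2 ≤ G.degree u) (hv : 2 ≤ G.degree v) :
    meg G ≤ meg (G.deleteEdges {s(u, v)}) ∧
    meg (G.deleteEdges {s(u, v)}) ≤ meg G + 2 := by
  classical
  have hn : ¬ (G.deleteEdges {s(u, v)}).Reachable u v := hn_of_hcut hconn hcut
  have hSne : ∀ (K : SimpleGraph V),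
      {n | ∃ M : Finset V, IsMEGSet K ↑M ∧ M.card = n}.Nonempty :=
    fun K => ⟨(Finset.univ : Finset V).card, Finset.univ, univ_isMEGSet K, rfl⟩
  constructor
  · -- meg G ≤ meg G'
    obtain ⟨M', hM', hcard⟩ : ∃ M' : Finset V,
        IsMEGSet (G.deleteEdges {s(u, v)}) ↑M' ∧ M'.card = meg (G.deleteEdges {s(u, v)}) :=
      Nat.sInf_mem (hSne _)
    have key : ∀ (w z : V), G.Adj w z → s(w, z) ≠ s(u, v) →
        ∃ x ∈ M', (G.deleteEdges {s(u, v)}).Reachable x w := by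
      intro w z hadj hne
      have hH : (G.deleteEdges {s(u, v)}).Adj w z := del_adj hadj hne
      obtain ⟨x, hxM, y, hyM, hmon⟩ := hM' s(w, z) hH
      obtain ⟨p, hp⟩ := hmon.1.exists_walk_length_eq_dist
      have hfe := hmon.2 p hp
      exact ⟨x, hxM, ⟨p.takeUntil w (p.fst_mem_support_of_mem_edges hfe)⟩⟩
    obtain ⟨w₁, hw₁, hwv⟩ := Finset.exists_mem_ne
      (by rw [card_neighborFinset_eq_degree]; omega : 1 < (G.neighborFinset u).card) v
    have hadj₁ : G.Adj u w₁ := (mem_neighborFinset G u w₁).mp hw₁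
    have hne₁ : s(u, w₁) ≠ s(u, v) := by
      intro hh
      rcases aux_sym2 hh with ⟨_, h2⟩ | ⟨h1, _⟩
      · exact hwv h2
      · exact huv.ne h1
    obtain ⟨x₁, hx₁, hr₁⟩ := key u w₁ hadj₁ hne₁
    obtain ⟨w₂, hw₂, hwu⟩ := Finset.exists_mem_ne
      (by rw [card_neighborFinset_eq_degree]; omega : 1 < (G.neighborFinset v).card) u
    have hadj₂ : G.Adj v w₂ := (mem_neighborFinset G v w₂).mp hw₂
    have hne₂ : s(v, w₂) ≠ s(u, v) := by
      intro hh
      rcases aux_sym2 hh with ⟨h1, _⟩ | ⟨_, h2⟩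
      · exact huv.ne h1.symm
      · exact hwu h2
    obtain ⟨x₂, hx₂, hr₂⟩ := key v w₂ hadj₂ hne₂
    have hGset : IsMEGSet G ↑M' := by
      intro f hf
      by_cases hfe : f = s(u, v)
      · subst hfe
        refine ⟨x₁, hx₁, x₂, hx₂, hconn.preconnected x₁ x₂, fun p _ => ?_⟩
        by_contra hnot
        have hok : ∀ e ∈ p.edges, e ∉ ({s(u, v)} : Set (Sym2 V)) := by
          intro e hep
          simp only [Set.mem_singleton_iff]
          rintro rfl
          exact hnot hep
        have hrx : (G.deleteEdges {s(u, v)}).Reachable x₁ x₂ := ⟨p.toDeleteEdges _ hok⟩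
        exact hn (hr₁.symm.trans (hrx.trans hr₂))
      · have hfH : f ∈ (G.deleteEdges {s(u, v)}).edgeSet := by
          rw [edgeSet_deleteEdges]
          exact ⟨hf, by simpa using hfe⟩
        obtain ⟨x, hx, y, hy, hmon⟩ := hM' f hfH
        refine ⟨x, hx, y, hy, Reachable.mono (G.deleteEdges_le _) hmon.1, fun p hp => ?_⟩
        have hnoe := noE hn hmon.1 p hp
        have hok : ∀ e ∈ p.edges, e ∉ ({s(u, v)} : Set (Sym2 V)) := by
          intro e hep
          simp only [Set.mem_singleton_iff]
          rintro rfl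
          exact hnoe hep
        have hlen : (p.toDeleteEdges _ hok).length = (G.deleteEdges {s(u, v)}).dist x y := by
          rw [sameDist hn hmon.1]
          rw [← hp]
          exact Walk.length_transfer _ _
        have := hmon.2 (p.toDeleteEdges _ hok) hlen
        rwa [Walk.edges_transfer] at this
    exact Nat.sInf_le ⟨M', hGset, hcard⟩
  · -- meg G' ≤ meg G + 2
    obtain ⟨M, hM, hcard⟩ : ∃ M : Finset V, IsMEGSet G ↑M ∧ M.card = meg G :=
      Nat.sInf_mem (hSne G)
    have hset : IsMEGSet (G.deleteEdges {s(u, v)}) ↑(insert u (insert v M)) := by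
      intro f hf
      have hfG : f ∈ G.edgeSet := by
        have := hf
        rw [edgeSet_deleteEdges] at this
        exact this.1
      obtain ⟨x, hx, y, hy, hmon⟩ := hM f hfG
      by_cases hrxy : (G.deleteEdges {s(u, v)}).Reachable x y
      · refine ⟨x, by simp [hx], y, by simp [hy], hrxy, fun q hq => ?_⟩
        have hlen : (q.transfer G (le_edges q)).length = G.dist x y := by
          rw [Walk.length_transfer, hq, sameDist hn hrxy]
        have := hmon.2 _ hlen
        rwa [Walk.edges_transfer] at this
      · have hcases : ((G.deleteEdges {s(u, v)}).Reachable x u ∧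
            (G.deleteEdges {s(u, v)}).Reachable v y) ∨
            ((G.deleteEdges {s(u, v)}).Reachable y u ∧
            (G.deleteEdges {s(u, v)}).Reachable v x) := by
          rcases side hconn x (u := u) (v := v) with h1 | h1 <;>
            rcases side hconn y (u := u) (v := v) with h2 | h2
          · exact absurd (h1.symm.trans h2) hrxy
          · exact Or.inl ⟨h1.symm, h2⟩
          · exact Or.inr ⟨h2.symm, h1⟩
          · exact absurd (h1.symm.trans h2) hrxy
        rcases hcases with ⟨h1, h2⟩ | ⟨h1, h2⟩
        · rcases master huv hconn hn h1 h2 f hf hmon with hm' | hm'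
          · exact ⟨x, by simp [hx], u, by simp, hm'⟩
          · exact ⟨v, by simp, y, by simp [hy], hm'⟩
        · rcases master huv hconn hn h1 h2 f hf (monitors_symm hmon) with hm' | hm'
          · exact ⟨y, by simp [hy], u, by simp, hm'⟩
          · exact ⟨v, by simp, x, by simp [hx], hm'⟩
    have hle : meg (G.deleteEdges {s(u, v)}) ≤ (insert u (insert v M)).card :=
      Nat.sInf_le ⟨_, hset, rfl⟩
    have h1 : (insert u (insert v M)).card ≤ (insert v M).card + 1 := Finset.card_insert_le _ _
    have h2 : (insert v M).card ≤ M.card + 1 := Finset.card_insert_le _ _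
    omega
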